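/- arXiv:1008.3216 — 2 statements merged into one kernel-verified Lean document; each statement's English description precedes it below -/
import Mathlib

section
/- Let G be a finite simple graph, let M be a maximum matching of G with |M| = m, let t be the number of isolated vertices of G, and let k be the number of bad vertices of G with respect to M. Then every total cover (S_V, S_E) of G satisfies |S_V| + |S_E| ≥ (m + k)/2 + t. -/
open SimpleGraph

/-- A total cover of a simple graph `G`: a pair of a vertex set `SV` and an edge set
`SE ⊆ E(G)` such that every vertex not in `SV` is adjacent to a vertex of `SV` or is an
endpoint of an edge of `SE`, and every edge not in `SE` has an endpoint in `SV` or shares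
an endpoint with an edge of `SE`. -/
def IsTotalCover {V : Type*} (G : SimpleGraph V) (SV : Set V) (SE : Set (Sym2 V)) : Prop :=
  SE ⊆ G.edgeSet ∧
  (∀ v : V, v ∉ SV → (∃ u ∈ SV, G.Adj v u) ∨ (∃ e ∈ SE, v ∈ e)) ∧
  (∀ e ∈ G.edgeSet, e ∉ SE → (∃ v ∈ SV, v ∈ e) ∨ (∃ f ∈ SE, ∃ v : V, v ∈ e ∧ v ∈ f))

/-- A matching of `G`: a set of edges of `G` that are pairwise vertex-disjoint. -/
def IsMatchingSet {V : Type*} (G : SimpleGraph V) (M : Set (Sym2 V)) : Prop :=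
  M ⊆ G.edgeSet ∧ ∀ e ∈ M, ∀ f ∈ M, e ≠ f → ∀ v : V, v ∈ e → v ∉ f

/-- A maximum matching of `G`: a matching of largest cardinality. -/
def IsMaximumMatching {V : Type*} (G : SimpleGraph V) (M : Set (Sym2 V)) : Prop :=
  IsMatchingSet G M ∧ ∀ M' : Set (Sym2 V), IsMatchingSet G M' → M'.ncard ≤ M.ncard

/-- A vertex is covered by a matching `M` if it is an endpoint of some edge of `M`. -/
def CoveredBy {V : Type*} (M : Set (Sym2 V)) (v : V) : Prop :=
  ∃ e ∈ M, v ∈ e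

/-- A bad vertex with respect to a matching `M`: a vertex not covered by `M` which is
adjacent to both endpoints of some edge of `M`. -/
def IsBad {V : Type*} (G : SimpleGraph V) (M : Set (Sym2 V)) (w : V) : Prop :=
  ¬ CoveredBy M w ∧ ∃ u v : V, s(u, v) ∈ M ∧ G.Adj w u ∧ G.Adj w v

/-- An isolated vertex: a vertex of degree 0, i.e. adjacent to no vertex. -/
def IsIsolated {V : Type*} (G : SimpleGraph V) (v : V) : Prop :=
  ∀ u : V, ¬ G.Adj v u

/-- The total graph `T(G)` of `G`: its vertices are the vertices and edges of `G`, with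
adjacency given by adjacency/incidence in `G`. -/
def totalGraph {V : Type*} (G : SimpleGraph V) : SimpleGraph (V ⊕ G.edgeSet) where
  Adj x y :=
    match x, y with
    | .inl a, .inl b => G.Adj a b
    | .inl a, .inr e => a ∈ e.1
    | .inr e, .inl a => a ∈ e.1
    | .inr e, .inr f => e ≠ f ∧ ∃ v : V, v ∈ e.1 ∧ v ∈ f.1
  symm := by
    constructor
    rintro (a | e) (b | f) h
    · exact G.symm.symm _ _ h
    · exact h
    · exact h
    · exact ⟨h.1.symm, by obtain ⟨v, h1, h2⟩ := h.2; exact ⟨v, h2, h1⟩⟩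
  loopless := by
    constructor
    rintro (a | e) h
    · exact G.loopless.irrefl a h
    · exact h.1 rfl
lemma sym2_three_eq {α : Type*} (f : Sym2 α) (x1 x2 x3 : α)
    (h1 : x1 ∈ f) (h2 : x2 ∈ f) (h3 : x3 ∈ f) (n12 : x1 ≠ x2) (n13 : x1 ≠ x3) (n23 : x2 ≠ x3) :
    False := by
  induction f using Sym2.ind with
  | _ a b =>
    rw [Sym2.mem_iff] at h1 h2 h3
    rcases h1 with rfl | rfl <;> rcases h2 with rfl | rfl <;> rcases h3 with rfl | rfl <;>
      simp_all

lemma sym2_cover {α : Type*} (f : Sym2 α) (C : α → Prop) (x1 x2 x3 : α)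
    (h1 : x1 ∈ f) (h2 : x2 ∈ f) (h3 : x3 ∈ f) (hC1 : C x1) (hC2 : C x2) (hC3 : C x3)
    (hne : ¬ (x1 = x2 ∧ x1 = x3)) :
    ∀ y ∈ f, C y := by
  induction f using Sym2.ind with
  | _ a b =>
    intro y hy
    rw [Sym2.mem_iff] at h1 h2 h3 hy
    rcases h1 with rfl | rfl <;> rcases h2 with rfl | rfl <;> rcases h3 with rfl | rfl <;>
      rcases hy with rfl | rfl <;> simp_all

lemma aug_lemma {V : Type*} [Fintype V] {G : SimpleGraph V} {M : Set (Sym2 V)}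
    (hM : IsMaximumMatching G M) {a b p q : V}
    (ha : ¬ CoveredBy M a) (hb : ¬ CoveredBy M b) (hab : a ≠ b)
    (hap : G.Adj a p) (hbq : G.Adj b q) (hpq : s(p,q) ∈ M) : False := by
  classical
  obtain ⟨⟨hMsub, hMdisj⟩, hMmax⟩ := hM
  have hpqadj : G.Adj p q := (G.mem_edgeSet).1 (hMsub hpq)
  have ha' : ∀ e ∈ M, a ∉ e := fun e he hae => ha ⟨e, he, hae⟩
  have hb' : ∀ e ∈ M, b ∉ e := fun e he hbe => hb ⟨e, he, hbe⟩
  have hpo : ∀ f ∈ M, f ≠ s(p,q) → p ∉ f := fun f hf hne =>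
    hMdisj _ hpq f hf hne.symm p (Sym2.mem_mk_left p q)
  have hqo : ∀ f ∈ M, f ≠ s(p,q) → q ∉ f := fun f hf hne =>
    hMdisj _ hpq f hf hne.symm q (Sym2.mem_mk_right p q)
  have haq : a ≠ q := fun h => ha ⟨s(p,q), hpq, h ▸ Sym2.mem_mk_right p q⟩
  have hbp : b ≠ p := fun h => hb ⟨s(p,q), hpq, h ▸ Sym2.mem_mk_left p q⟩
  set M' : Set (Sym2 V) := insert s(a,p) (insert s(b,q) (M \ {s(p,q)})) with hM'
  have key1 : ∀ v, v ∈ (s(a,p) : Sym2 V) → ∀ f ∈ M, f ≠ s(p,q) → v ∉ f := by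
    intro v hv f hf hne
    rcases Sym2.mem_iff.1 hv with rfl | rfl
    · exact ha' f hf
    · exact hpo f hf hne
  have key2 : ∀ v, v ∈ (s(b,q) : Sym2 V) → ∀ f ∈ M, f ≠ s(p,q) → v ∉ f := by
    intro v hv f hf hne
    rcases Sym2.mem_iff.1 hv with rfl | rfl
    · exact hb' f hf
    · exact hqo f hf hne
  have key3 : ∀ v, v ∈ (s(a,p) : Sym2 V) → v ∉ (s(b,q) : Sym2 V) := by
    intro v hv hv'
    rcases Sym2.mem_iff.1 hv with rfl | rfl <;> rcases Sym2.mem_iff.1 hv' with h | h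
    · exact hab h
    · exact haq h
    · exact hbp h.symm
    · exact hpqadj.ne h
  have hmatch : IsMatchingSet G M' := by
    constructor
    · intro e he
      rcases he with rfl | rfl | he
      · exact G.mem_edgeSet.2 hap
      · exact G.mem_edgeSet.2 hbq
      · exact hMsub he.1
    · intro e he f hf hef v hv
      rcases he with rfl | rfl | he <;> rcases hf with rfl | rfl | hf
      · exact absurd rfl hef
      · exact key3 v hv
      · exact key1 v hv f hf.1 hf.2
      · intro hv'; exact key3 v hv' hv
      · exact absurd rfl hef
      · exact key2 v hv f hf.1 hf.2
      · intro hv'; exact key1 v hv' e he.1 he.2 hv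
      · intro hv'; exact key2 v hv' e he.1 he.2 hv
      · exact hMdisj e he.1 f hf.1 hef v hv
  have h1 : s(b,q) ∉ M \ {s(p,q)} := fun h => hb ⟨_, h.1, Sym2.mem_mk_left b q⟩
  have h2 : s(a,p) ∉ insert s(b,q) (M \ {s(p,q)}) := by
    intro h
    rcases h with h | h
    · rcases Sym2.eq_iff.1 h with ⟨h1, h2⟩ | ⟨h1, h2⟩
      · exact hab h1
      · exact haq h1
    · exact ha ⟨_, h.1, Sym2.mem_mk_left a p⟩
  have hcard : M'.ncard = (M \ {s(p,q)}).ncard + 2 := by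
    rw [hM', Set.ncard_insert_of_notMem h2, Set.ncard_insert_of_notMem h1]
  have hcard2 : (M \ {s(p,q)}).ncard = M.ncard - 1 := Set.ncard_diff_singleton_of_mem hpq
  have hpos : 0 < M.ncard := (Set.ncard_pos (Set.toFinite M)).2 ⟨_, hpq⟩
  have := hMmax M' hmatch
  omega

/-- with `M` a maximum matching of size `m`, `t` the number of isolated
vertices and `k` the number of bad vertices, every total cover has size at least
`(m + k)/2 + t`. -/
theorem stmt_0 {V : Type*} [Fintype V] (G : SimpleGraph V)
    (M : Set (Sym2 V)) (hM : IsMaximumMatching G M)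
    (m t k : ℕ)
    (hm : M.ncard = m)
    (ht : {v : V | _root_.IsIsolated G v}.ncard = t)
    (hk : {w : V | IsBad G M w}.ncard = k)
    (SV : Set V) (SE : Set (Sym2 V)) (hS : IsTotalCover G SV SE) :
    ((m : ℝ) + k) / 2 + t ≤ SV.ncard + SE.ncard := by
  classical
  obtain ⟨hSEsub, hSVdom, hSEdom⟩ := hS
  have hMsub : M ⊆ G.edgeSet := hM.1.1
  have hMdisj : ∀ e ∈ M, ∀ f ∈ M, e ≠ f → ∀ v : V, v ∈ e → v ∉ f := hM.1.2
  set B : Set V := {w | IsBad G M w} with hBdef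
  set Iso : Set V := {v | _root_.IsIsolated G v} with hIsodef
  -- choose, for each bad vertex, the endpoints of a matching edge forming a triangle with it
  have hex : ∀ w, IsBad G M w → ∃ pr : V × V, s(pr.1, pr.2) ∈ M ∧ G.Adj w pr.1 ∧ G.Adj w pr.2 := by
    rintro w ⟨-, u, v, h1, h2, h3⟩
    exact ⟨(u, v), h1, h2, h3⟩
  set P : V → V × V := fun w =>
    if h : ∃ pr : V × V, s(pr.1, pr.2) ∈ M ∧ G.Adj w pr.1 ∧ G.Adj w pr.2 then h.choose
    else (w, w) with hPdef
  have hP : ∀ w, IsBad G M w → s((P w).1, (P w).2) ∈ M ∧ G.Adj w (P w).1 ∧ G.Adj w (P w).2 := by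
    intro w hw
    have h := hex w hw
    simp only [hPdef, dif_pos h]
    exact h.choose_spec
  set ebad : V → Sym2 V := fun w => s((P w).1, (P w).2) with hebaddef
  have hebadM : ∀ w, IsBad G M w → ebad w ∈ M := fun w hw => (hP w hw).1
  -- each matching edge has at most one bad vertex attached to it
  have hG1 : ∀ w w', IsBad G M w → IsBad G M w' → ebad w = ebad w' → w = w' := by
    intro w w' hw hw' heq
    by_contra hne
    have h1 := hP w hw
    have h2 := hP w' hw'
    have heq' : s((P w).1, (P w).2) = s((P w').1, (P w').2) := heq
    have hw'1 : G.Adj w' (P w).1 ∧ G.Adj w' (P w).2 := by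
      rcases Sym2.eq_iff.1 heq' with ⟨ha, hb⟩ | ⟨ha, hb⟩
      · rw [ha, hb]; exact ⟨h2.2.1, h2.2.2⟩
      · rw [ha, hb]; exact ⟨h2.2.2, h2.2.1⟩
    exact aug_lemma hM hw.1 hw'.1 hne h1.2.1 hw'1.2 h1.1
  -- the core of a cluster
  set core : Sym2 V → Set V := fun e => {x | x ∈ e} ∪ {w | IsBad G M w ∧ ebad w = e} with hcoredef
  have hcore_mem : ∀ e, ∀ x, x ∈ e → x ∈ core e := fun e x hx => Or.inl hx
  have hcore_bad : ∀ e w, IsBad G M w → ebad w = e → w ∈ core e := fun e w h1 h2 => Or.inr ⟨h1, h2⟩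
  have hcore_disj : ∀ e ∈ M, ∀ e' ∈ M, e ≠ e' → ∀ x, x ∈ core e → x ∈ core e' → False := by
    intro e he e' he' hne x hx hx'
    rcases hx with hx | ⟨hb, hbe⟩
    · rcases hx' with hx' | ⟨hb', hbe'⟩
      · exact hMdisj e he e' he' hne x hx hx'
      · exact hb'.1 ⟨e, he, hx⟩
    · rcases hx' with hx' | ⟨hb', hbe'⟩
      · exact hb.1 ⟨e', he', hx'⟩
      · exact hne (hbe ▸ hbe' ▸ rfl)
  have hcore_noniso : ∀ e ∈ M, ∀ x, x ∈ core e → ¬ _root_.IsIsolated G x := by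
    intro e he x hx hiso
    rcases hx with hx | ⟨hb, -⟩
    · obtain ⟨y, hy⟩ := Sym2.mem_iff_exists.1 hx
      have : G.Adj x y := G.mem_edgeSet.1 (by rw [← hy]; exact hMsub he)
      exact hiso y this
    · exact hiso _ (hP x hb).2.1
  -- local cover elements of a cluster
  set InL : Sym2 V → (V ⊕ Sym2 V) → Prop := fun e d =>
    Sum.elim (fun x => x ∈ SV ∧ x ∈ core e) (fun f => f ∈ SE ∧ ∃ x ∈ core e, x ∈ f) d
    with hInLdef
  have hInL_exists : ∀ e ∈ M, ∃ d, InL e d := by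
    intro e he
    by_cases hse : e ∈ SE
    · refine ⟨Sum.inr e, ?_⟩
      simp only [hInLdef, Sum.elim_inr]
      exact ⟨hse, e.out.1, hcore_mem e _ (Sym2.out_fst_mem e), Sym2.out_fst_mem e⟩
    · rcases hSEdom e (hMsub he) hse with ⟨v, hv, hve⟩ | ⟨f, hf, v, hve, hvf⟩
      · refine ⟨Sum.inl v, ?_⟩
        simp only [hInLdef, Sum.elim_inl]
        exact ⟨hv, hcore_mem e v hve⟩
      · refine ⟨Sum.inr f, ?_⟩
        simp only [hInLdef, Sum.elim_inr]
        exact ⟨hf, v, hcore_mem e v hve, hvf⟩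
  set d1 : Sym2 V → V ⊕ Sym2 V := fun e => if h : ∃ d, InL e d then h.choose else Sum.inr e
    with hd1def
  have hd1 : ∀ e ∈ M, InL e (d1 e) := by
    intro e he
    have h := hInL_exists e he
    simp only [hd1def, dif_pos h]
    exact h.choose_spec
  set d2 : Sym2 V → V ⊕ Sym2 V :=
    fun e => if h : ∃ d, InL e d ∧ d ≠ d1 e then h.choose else d1 e with hd2def
  have hd2 : ∀ e ∈ M, InL e (d2 e) := by
    intro e he
    by_cases h : ∃ d, InL e d ∧ d ≠ d1 e
    · simp only [hd2def, dif_pos h]; exact h.choose_spec.1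
    · simp only [hd2def, dif_neg h]; exact hd1 e he
  have hd2uniq : ∀ e, d2 e = d1 e → ∀ d, InL e d → d = d1 e := by
    intro e heq d hd
    by_contra hne
    have hpos : ∃ d', InL e d' ∧ d' ≠ d1 e := ⟨d, hd, hne⟩
    have hch : d2 e = hpos.choose := by simp only [hd2def, dif_pos hpos]
    exact hpos.choose_spec.2 (hch.symm.trans heq)
  -- exclusivity : if a bad cluster has a unique local cover element, it is an edge inside the core
  have hexcl : ∀ e ∈ M, ∀ w, IsBad G M w → ebad w = e →
      (∀ d, InL e d → d = d1 e) → ∃ f, d1 e = Sum.inr f ∧ ∀ x ∈ f, x ∈ core e := by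
    intro e he w hw hew huniq
    obtain ⟨hpM, hadj1, hadj2⟩ := hP w hw
    have heuv : e = s((P w).1, (P w).2) := hew.symm
    have hcu : (P w).1 ∈ core e := hcore_mem e _ (by rw [heuv]; exact Sym2.mem_mk_left _ _)
    have hcv : (P w).2 ∈ core e := hcore_mem e _ (by rw [heuv]; exact Sym2.mem_mk_right _ _)
    have hcw : w ∈ core e := hcore_bad e w hw hew
    have huv : G.Adj (P w).1 (P w).2 := G.mem_edgeSet.1 (hMsub hpM)
    have subD : ∀ a b : V, G.Adj a b → a ∈ core e → b ∈ core e →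
        (∃ x, d1 e = Sum.inl x ∧ (x = a ∨ x = b)) ∨
        (∃ f, d1 e = Sum.inr f ∧ (f = s(a, b) ∨ ∃ x, x ∈ f ∧ (x = a ∨ x = b))) := by
      intro a b hadj hca hcb
      by_cases hse : s(a, b) ∈ SE
      · have hin : InL e (Sum.inr s(a, b)) := by
          simp only [hInLdef, Sum.elim_inr]
          exact ⟨hse, a, hca, Sym2.mem_mk_left a b⟩
        exact Or.inr ⟨s(a, b), (huniq _ hin).symm, Or.inl rfl⟩
      · rcases hSEdom s(a, b) (G.mem_edgeSet.2 hadj) hse with ⟨x, hx, hxe⟩ | ⟨f, hf, x, hxe, hxf⟩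
        · have hcx : x ∈ core e := by rcases Sym2.mem_iff.1 hxe with rfl | rfl; exacts [hca, hcb]
          have hin : InL e (Sum.inl x) := by
            simp only [hInLdef, Sum.elim_inl]; exact ⟨hx, hcx⟩
          exact Or.inl ⟨x, (huniq _ hin).symm, Sym2.mem_iff.1 hxe⟩
        · have hcx : x ∈ core e := by rcases Sym2.mem_iff.1 hxe with rfl | rfl; exacts [hca, hcb]
          have hin : InL e (Sum.inr f) := by
            simp only [hInLdef, Sum.elim_inr]; exact ⟨hf, x, hcx, hxf⟩
          exact Or.inr ⟨f, (huniq _ hin).symm, Or.inr ⟨x, hxf, Sym2.mem_iff.1 hxe⟩⟩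
    have D1 := subD w (P w).1 hadj1 hcw hcu
    have D2 := subD w (P w).2 hadj2 hcw hcv
    have D3 := subD (P w).1 (P w).2 huv hcu hcv
    have hwu : w ≠ (P w).1 := hadj1.ne
    have hwv : w ≠ (P w).2 := hadj2.ne
    have huv' : (P w).1 ≠ (P w).2 := huv.ne
    rcases hD : d1 e with x | f
    · exfalso
      rw [hD] at D1 D2 D3
      have e1 : x = w ∨ x = (P w).1 := by
        rcases D1 with ⟨x1, hx1, hm1⟩ | ⟨f1, hf1, -⟩
        · obtain rfl := Sum.inl.inj hx1; exact hm1
        · exact absurd hf1 (by simp)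
      have e2 : x = w ∨ x = (P w).2 := by
        rcases D2 with ⟨x1, hx1, hm1⟩ | ⟨f1, hf1, -⟩
        · obtain rfl := Sum.inl.inj hx1; exact hm1
        · exact absurd hf1 (by simp)
      have e3 : x = (P w).1 ∨ x = (P w).2 := by
        rcases D3 with ⟨x1, hx1, hm1⟩ | ⟨f1, hf1, -⟩
        · obtain rfl := Sum.inl.inj hx1; exact hm1
        · exact absurd hf1 (by simp)
      rcases e1 with rfl | rfl
      · exact e3.elim hwu hwv
      · exact e2.elim (fun h => hwu h.symm) huv'
    · refine ⟨f, rfl, ?_⟩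
      rw [hD] at D1 D2 D3
      have getx : ∀ a b : V,
          ((∃ x, (Sum.inr f : V ⊕ Sym2 V) = Sum.inl x ∧ (x = a ∨ x = b)) ∨
           (∃ f1, (Sum.inr f : V ⊕ Sym2 V) = Sum.inr f1 ∧
             (f1 = s(a, b) ∨ ∃ x, x ∈ f1 ∧ (x = a ∨ x = b)))) →
          f = s(a, b) ∨ ∃ x, x ∈ f ∧ (x = a ∨ x = b) := by
        rintro a b (⟨x1, hx1, -⟩ | ⟨f1, hf1, hm⟩)
        · exact absurd hx1 (by simp)
        · obtain rfl := Sum.inr.inj hf1; exact hm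
      have D1' := getx w (P w).1 D1
      have D2' := getx w (P w).2 D2
      have D3' := getx (P w).1 (P w).2 D3
      rcases D1' with rfl | ⟨x1, hx1f, hx1m⟩
      · intro y hy; rcases Sym2.mem_iff.1 hy with rfl | rfl; exacts [hcw, hcu]
      rcases D2' with rfl | ⟨x2, hx2f, hx2m⟩
      · intro y hy; rcases Sym2.mem_iff.1 hy with rfl | rfl; exacts [hcw, hcv]
      rcases D3' with rfl | ⟨x3, hx3f, hx3m⟩
      · intro y hy; rcases Sym2.mem_iff.1 hy with rfl | rfl; exacts [hcu, hcv]
      have hx1c : x1 ∈ core e := by rcases hx1m with rfl | rfl; exacts [hcw, hcu]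
      have hx2c : x2 ∈ core e := by rcases hx2m with rfl | rfl; exacts [hcw, hcv]
      have hx3c : x3 ∈ core e := by rcases hx3m with rfl | rfl; exacts [hcu, hcv]
      refine sym2_cover f (· ∈ core e) x1 x2 x3 hx1f hx2f hx3f hx1c hx2c hx3c ?_
      rintro ⟨h12, h13⟩
      rw [← h12] at hx2m
      rw [← h13] at hx3m
      rcases hx1m with rfl | rfl
      · exact hx3m.elim hwu hwv
      · exact hx2m.elim (fun h => hwu h.symm) huv'
  -- the isolated vertices are in SV
  have hIsoSub : Iso ⊆ SV := by
    intro v hv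
    by_contra hvn
    rcases hSVdom v hvn with ⟨u, -, hadj⟩ | ⟨e, he, hve⟩
    · exact hv u hadj
    · obtain ⟨y, hy⟩ := Sym2.mem_iff_exists.1 hve
      exact hv y (G.mem_edgeSet.1 (by rw [← hy]; exact hSEsub he))
  -- finset setup
  have hMfin : M.Finite := Set.toFinite M
  have hBfin : B.Finite := Set.toFinite B
  have hSVfin : (SV \ Iso).Finite := Set.toFinite _
  have hSEfin : SE.Finite := Set.toFinite SE
  set S : Finset (Sym2 V ⊕ V) := hMfin.toFinset.image Sum.inl ∪ hBfin.toFinset.image Sum.inr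
    with hSdef
  set T : Finset (V ⊕ Sym2 V) := hSVfin.toFinset.image Sum.inl ∪ hSEfin.toFinset.image Sum.inr
    with hTdef
  set Φ : Sym2 V ⊕ V → V ⊕ Sym2 V := Sum.elim d1 (fun w => d2 (ebad w)) with hΦdef
  have hmemS_inl : ∀ e, Sum.inl e ∈ S → e ∈ M := by
    intro e he
    rw [hSdef, Finset.mem_union] at he
    rcases he with he | he
    · obtain ⟨a, ha, hae⟩ := Finset.mem_image.1 he
      obtain rfl := Sum.inl.inj hae
      exact hMfin.mem_toFinset.1 ha
    · obtain ⟨a, -, hae⟩ := Finset.mem_image.1 he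
      exact absurd hae (by simp)
  have hmemS_inr : ∀ w, Sum.inr w ∈ S → IsBad G M w := by
    intro w hw
    rw [hSdef, Finset.mem_union] at hw
    rcases hw with hw | hw
    · obtain ⟨a, -, hae⟩ := Finset.mem_image.1 hw
      exact absurd hae (by simp)
    · obtain ⟨a, ha, hae⟩ := Finset.mem_image.1 hw
      obtain rfl := Sum.inr.inj hae
      exact hBfin.mem_toFinset.1 ha
  have hScard : S.card = m + k := by
    rw [hSdef, Finset.card_union_of_disjoint, Finset.card_image_of_injective _ Sum.inl_injective,
      Finset.card_image_of_injective _ Sum.inr_injective,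
      ← Set.ncard_eq_toFinset_card M hMfin, ← Set.ncard_eq_toFinset_card B hBfin, hm, hk]
    refine Finset.disjoint_left.2 ?_
    intro x hx hx'
    obtain ⟨a, -, rfl⟩ := Finset.mem_image.1 hx
    obtain ⟨b, -, hb⟩ := Finset.mem_image.1 hx'
    exact absurd hb (by simp)
  have hTcard : T.card = (SV.ncard - t) + SE.ncard := by
    rw [hTdef, Finset.card_union_of_disjoint, Finset.card_image_of_injective _ Sum.inl_injective,
      Finset.card_image_of_injective _ Sum.inr_injective,
      ← Set.ncard_eq_toFinset_card _ hSVfin, ← Set.ncard_eq_toFinset_card _ hSEfin,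
      Set.ncard_diff hIsoSub, ht]
    refine Finset.disjoint_left.2 ?_
    intro x hx hx'
    obtain ⟨a, -, rfl⟩ := Finset.mem_image.1 hx
    obtain ⟨b, -, hb⟩ := Finset.mem_image.1 hx'
    exact absurd hb (by simp)
  -- at most two clusters share a local cover element
  have hC1 : ∀ dd : V ⊕ Sym2 V, ∀ e1 ∈ M, ∀ e2 ∈ M, ∀ e3 ∈ M,
      InL e1 dd → InL e2 dd → InL e3 dd → e1 = e2 ∨ e1 = e3 ∨ e2 = e3 := by
    intro dd e1 he1 e2 he2 e3 he3 h1 h2 h3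
    by_contra hcon
    push_neg at hcon
    obtain ⟨n12, n13, n23⟩ := hcon
    rcases dd with x | f
    · simp only [hInLdef, Sum.elim_inl] at h1 h2
      exact hcore_disj e1 he1 e2 he2 n12 x h1.2 h2.2
    · simp only [hInLdef, Sum.elim_inr] at h1 h2 h3
      obtain ⟨-, x1, hc1, hf1⟩ := h1
      obtain ⟨-, x2, hc2, hf2⟩ := h2
      obtain ⟨-, x3, hc3, hf3⟩ := h3
      have d12 : x1 ≠ x2 := fun h => hcore_disj e1 he1 e2 he2 n12 x1 hc1 (by rw [h]; exact hc2)
      have d13 : x1 ≠ x3 := fun h => hcore_disj e1 he1 e3 he3 n13 x1 hc1 (by rw [h]; exact hc3)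
      have d23 : x2 ≠ x3 := fun h => hcore_disj e2 he2 e3 he3 n23 x2 hc2 (by rw [h]; exact hc3)
      exact sym2_three_eq f x1 x2 x3 hf1 hf2 hf3 d12 d13 d23
  -- fibers of Φ have at most two elements
  have hfiber : ∀ dd ∈ T, (S.filter fun x => Φ x = dd).card ≤ 2 := by
    intro dd _
    set F := S.filter fun x => Φ x = dd with hFdef
    have hF_inl : ∀ e, Sum.inl e ∈ F → e ∈ M ∧ d1 e = dd := by
      intro e he
      rw [hFdef, Finset.mem_filter] at he
      refine ⟨hmemS_inl e he.1, ?_⟩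
      have := he.2
      simpa only [hΦdef, Sum.elim_inl] using this
    have hF_inr : ∀ w, Sum.inr w ∈ F → IsBad G M w ∧ d2 (ebad w) = dd := by
      intro w hw
      rw [hFdef, Finset.mem_filter] at hw
      refine ⟨hmemS_inr w hw.1, ?_⟩
      have := hw.2
      simpa only [hΦdef, Sum.elim_inr] using this
    by_cases hboth : ∃ e, e ∈ M ∧ Sum.inl e ∈ F ∧ ∃ w, IsBad G M w ∧ ebad w = e ∧ Sum.inr w ∈ F
    · obtain ⟨e, heM, heF, w, hw, hew, hwF⟩ := hboth
      have h1 : d1 e = dd := (hF_inl e heF).2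
      have h2 : d2 e = dd := by
        have := (hF_inr w hwF).2
        rwa [hew] at this
      have huniq : ∀ d, InL e d → d = d1 e := hd2uniq e (h2.trans h1.symm)
      obtain ⟨f, hf, hfcore⟩ := hexcl e heM w hw hew huniq
      have hddf : dd = Sum.inr f := by rw [← h1, hf]
      have hsub : F ⊆ {Sum.inl e, Sum.inr w} := by
        intro x hx
        rcases x with e' | w'
        · obtain ⟨he', hd'⟩ := hF_inl e' hx
          have hin : InL e' dd := hd' ▸ hd1 e' he'
          rw [hddf] at hin
          simp only [hInLdef, Sum.elim_inr] at hin
          obtain ⟨-, x0, hx0c, hx0f⟩ := hin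
          have : e' = e := by
            by_contra hne
            exact hcore_disj e' he' e heM hne x0 hx0c (hfcore x0 hx0f)
          simp [this]
        · obtain ⟨hw', hd'⟩ := hF_inr w' hx
          have hin : InL (ebad w') dd := hd' ▸ hd2 _ (hebadM w' hw')
          rw [hddf] at hin
          simp only [hInLdef, Sum.elim_inr] at hin
          obtain ⟨-, x0, hx0c, hx0f⟩ := hin
          have hee : ebad w' = e := by
            by_contra hne
            exact hcore_disj _ (hebadM w' hw') e heM hne x0 hx0c (hfcore x0 hx0f)
          have : w' = w := hG1 w' w hw' hw (hee.trans hew.symm)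
          simp [this]
      calc F.card ≤ ({Sum.inl e, Sum.inr w} : Finset (Sym2 V ⊕ V)).card :=
            Finset.card_le_card hsub
        _ ≤ 2 := (Finset.card_insert_le _ _).trans (by simp)
    · by_contra hgt
      push_neg at hgt
      obtain ⟨x, hx, y, hy, z, hz, nxy, nxz, nyz⟩ := Finset.two_lt_card.1 hgt
      set cl : Sym2 V ⊕ V → Sym2 V := Sum.elim id ebad with hcldef
      have hclM : ∀ x, x ∈ F → cl x ∈ M ∧ InL (cl x) dd := by
        intro x hx
        rcases x with e | w
        · obtain ⟨he, hd⟩ := hF_inl e hx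
          exact ⟨he, by simpa only [hcldef, Sum.elim_inl, id] using hd ▸ hd1 e he⟩
        · obtain ⟨hw, hd⟩ := hF_inr w hx
          exact ⟨by simpa only [hcldef, Sum.elim_inr] using hebadM w hw,
            by simpa only [hcldef, Sum.elim_inr] using hd ▸ hd2 _ (hebadM w hw)⟩
      have hinj : ∀ x, x ∈ F → ∀ y, y ∈ F → cl x = cl y → x = y := by
        intro x hx y hy hcl
        rcases x with e | w <;> rcases y with e' | w'
        · simp only [hcldef, Sum.elim_inl, id] at hcl
          rw [hcl]
        · simp only [hcldef, Sum.elim_inl, Sum.elim_inr, id] at hcl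
          exact absurd ⟨e, (hF_inl e hx).1, hx, w', (hF_inr w' hy).1, hcl.symm, hy⟩ hboth
        · simp only [hcldef, Sum.elim_inl, Sum.elim_inr, id] at hcl
          exact absurd ⟨e', (hF_inl e' hy).1, hy, w, (hF_inr w hx).1, hcl, hx⟩ hboth
        · simp only [hcldef, Sum.elim_inr] at hcl
          rw [hG1 w w' (hF_inr w hx).1 (hF_inr w' hy).1 hcl]
      have c1 := hclM x hx
      have c2 := hclM y hy
      have c3 := hclM z hz
      rcases hC1 dd (cl x) c1.1 (cl y) c2.1 (cl z) c3.1 c1.2 c2.2 c3.2 with h | h | h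
      · exact nxy (hinj x hx y hy h)
      · exact nxz (hinj x hx z hz h)
      · exact nyz (hinj y hy z hz h)
  -- Φ maps S into T
  have himg : ∀ x ∈ S, Φ x ∈ T := by
    have hmain : ∀ e ∈ M, ∀ d, InL e d → d ∈ T := by
      intro e he d hd
      rcases d with v | f
      · simp only [hInLdef, Sum.elim_inl] at hd
        have hnv : ¬ _root_.IsIsolated G v := hcore_noniso e he v hd.2
        rw [hTdef]
        exact Finset.mem_union_left _
          (Finset.mem_image_of_mem _ (hSVfin.mem_toFinset.2 ⟨hd.1, hnv⟩))
      · simp only [hInLdef, Sum.elim_inr] at hd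
        rw [hTdef]
        exact Finset.mem_union_right _
          (Finset.mem_image_of_mem _ (hSEfin.mem_toFinset.2 hd.1))
    intro x hx
    rcases x with e | w
    · have he := hmemS_inl e hx
      simpa only [hΦdef, Sum.elim_inl] using hmain e he (d1 e) (hd1 e he)
    · have hw := hmemS_inr w hx
      simpa only [hΦdef, Sum.elim_inr] using
        hmain (ebad w) (hebadM w hw) _ (hd2 _ (hebadM w hw))
  -- conclusion
  have hcount : S.card ≤ 2 * T.card := by
    rw [Finset.card_eq_sum_card_fiberwise himg]
    calc ∑ dd ∈ T, (S.filter fun x => Φ x = dd).card ≤ ∑ dd ∈ T, 2 :=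
          Finset.sum_le_sum hfiber
      _ = 2 * T.card := by rw [Finset.sum_const, smul_eq_mul, mul_comm]
  have htle : t ≤ SV.ncard := by
    rw [← ht]
    exact Set.ncard_le_ncard hIsoSub (Set.toFinite SV)
  have hmainN : m + k + 2 * t ≤ 2 * (SV.ncard + SE.ncard) := by
    rw [hScard, hTcard] at hcount
    omega
  have hcast := (Nat.cast_le (α := ℝ)).2 hmainN
  push_cast at hcast
  linarith
end

section
/- Let G be a finite simple graph and M a maximum matching of G. Suppose w is a vertex not covered by M that is adjacent to both endpoints u and v of an edge uv ∈ M. Then for every vertex z ≠ w that is not covered by M, z is adjacent to neither u nor v. -/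
open SimpleGraph

lemma stmt_6_aux {V : Type*} [Fintype V] (G : SimpleGraph V)
    (M : Set (Sym2 V)) (hM : IsMaximumMatching G M)
    (w u v : V) (huv : s(u, v) ∈ M)
    (hw : ¬ CoveredBy M w) (hwv : G.Adj w v)
    (z : V) (hzw : z ≠ w) (hz : ¬ CoveredBy M z) (hzu : G.Adj z u) : False := by
  -- basic distinctness facts
  have hwE : ∀ e ∈ M, w ∉ e := fun e he hm => hw ⟨e, he, hm⟩
  have hzE : ∀ e ∈ M, z ∉ e := fun e he hm => hz ⟨e, he, hm⟩
  have hwu2 : w ≠ u := fun h => hwE _ huv (by simp [h])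
  have hwv2 : w ≠ v := fun h => hwE _ huv (by simp [h])
  have hzu2 : z ≠ u := fun h => hzE _ huv (by simp [h])
  have hzv2 : z ≠ v := fun h => hzE _ huv (by simp [h])
  have huv2 : u ≠ v := (hM.1.1 huv).ne
  -- endpoints u, v appear in no other matching edge
  have huE : ∀ e ∈ M, e ≠ s(u, v) → u ∉ e := fun e he hne hm =>
    hM.1.2 _ huv _ he (Ne.symm hne) u (by simp) hm
  have hvE : ∀ e ∈ M, e ≠ s(u, v) → v ∉ e := fun e he hne hm =>
    hM.1.2 _ huv _ he (Ne.symm hne) v (by simp) hm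
  set M' : Set (Sym2 V) := insert s(w, v) (insert s(z, u) (M \ {s(u, v)})) with hM'def
  have hmatch : IsMatchingSet G M' := by
    constructor
    · rintro e (rfl | rfl | ⟨he, -⟩)
      · exact hwv
      · exact hzu
      · exact hM.1.1 he
    · have key : ∀ e ∈ M', ∀ x : V, x ∈ e →
        (e = s(w,v) ∧ (x = w ∨ x = v)) ∨ (e = s(z,u) ∧ (x = z ∨ x = u)) ∨
        (e ∈ M ∧ e ≠ s(u,v)) := by
        rintro e (rfl | rfl | ⟨he, hne⟩) x hx
        · exact Or.inl ⟨rfl, by simpa using hx⟩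
        · exact Or.inr (Or.inl ⟨rfl, by simpa using hx⟩)
        · exact Or.inr (Or.inr ⟨he, by simpa using hne⟩)
      intro e he f hf hef x hxe hxf
      rcases key e he x hxe with ⟨rfl, hx⟩ | ⟨rfl, hx⟩ | ⟨heM, hene⟩ <;>
        rcases key f hf x hxf with ⟨rfl, hx'⟩ | ⟨rfl, hx'⟩ | ⟨hfM, hfne⟩
      · exact hef rfl
      · rcases hx with rfl | rfl <;> rcases hx' with h | h <;>
          first | exact hzw h.symm | exact hzv2 h.symm | exact hwu2 h | exact huv2 h.symm
      · rcases hx with rfl | rfl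
        · exact hwE _ hfM hxf
        · exact hvE _ hfM hfne hxf
      · rcases hx with rfl | rfl <;> rcases hx' with h | h <;>
          first | exact hzw h | exact hwu2 h.symm | exact hzv2 h | exact huv2 h
      · exact hef rfl
      · rcases hx with rfl | rfl
        · exact hzE _ hfM hxf
        · exact huE _ hfM hfne hxf
      · rcases hx' with rfl | rfl
        · exact hwE _ heM hxe
        · exact hvE _ heM hene hxe
      · rcases hx' with rfl | rfl
        · exact hzE _ heM hxe
        · exact huE _ heM hene hxe
      · exact hM.1.2 e heM f hfM hef x hxe hxf
  -- cardinality
  have h1 : s(w, v) ∉ insert s(z, u) (M \ {s(u, v)}) := by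
    rintro (h | ⟨h, -⟩)
    · rw [Sym2.eq, Sym2.rel_iff'] at h
      rcases h with h | h
      · exact hzw (congrArg Prod.fst h).symm
      · exact hwu2 (congrArg Prod.fst h)
    · exact hwE _ h (by simp)
  have h2 : s(z, u) ∉ M \ {s(u, v)} := fun h => hzE _ h.1 (by simp)
  have h3 : (M \ {s(u, v)}).ncard + 1 = M.ncard :=
    Set.ncard_diff_singleton_add_one huv (Set.toFinite M)
  have h4 : M'.ncard = (M \ {s(u, v)}).ncard + 2 := by
    rw [hM'def, Set.ncard_insert_of_notMem h1 (Set.toFinite _),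
      Set.ncard_insert_of_notMem h2 (Set.toFinite _)]
  have := hM.2 M' hmatch
  omega

/-- if `w` is uncovered by a maximum matching `M` and adjacent to both
endpoints `u, v` of an edge of `M`, then no other uncovered vertex is adjacent to `u`
or to `v`. -/
theorem stmt_6 {V : Type*} [Fintype V] (G : SimpleGraph V)
    (M : Set (Sym2 V)) (hM : IsMaximumMatching G M)
    (w u v : V) (huv : s(u, v) ∈ M)
    (hw : ¬ CoveredBy M w) (hwu : G.Adj w u) (hwv : G.Adj w v) :
    ∀ z : V, z ≠ w → ¬ CoveredBy M z → ¬ G.Adj z u ∧ ¬ G.Adj z v := by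
  intro z hzw hz
  constructor
  · exact fun hzu => stmt_6_aux G M hM w u v huv hw hwv z hzw hz hzu
  · exact fun hzv => stmt_6_aux G M hM w v u (by rwa [Sym2.eq_swap]) hw hwu z hzw hz hzv
end
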